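/- arXiv:2304.04174 — 2 statements merged into one kernel-verified Lean document; each statement's English description precedes it below -/
import Mathlib

section
/- Let A_1, A_2 be real symmetric n×n matrices, X a nonzero positive semidefinite real symmetric n×n matrix with tr(A_1 X) = tr(A_2 X) = 0, and V ⊆ ℝ^n a linear subspace containing Range(X) with dim(V) ≥ 3. Then there exists a nonzero vector x ∈ V with x^T A_1 x = 0 and x^T A_2 x = 0. -/
open Matrix Complex

lemma aux_L1 (a : ℂ) : ∃ ξ : ℂ, ξ^2 + (starRingEnd ℂ) ξ + a = 0 := by
  by_cases ha2 : a.im = 0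
  · by_cases ha1 : a.re ≤ 1/4
    · refine ⟨⟨(-1 + Real.sqrt (1 - 4*a.re))/2, 0⟩, ?_⟩
      have hs : Real.sqrt (1 - 4*a.re) ^ 2 = 1 - 4*a.re := Real.sq_sqrt (by linarith)
      apply Complex.ext <;>
        simp [pow_two, Complex.add_re, Complex.add_im, Complex.mul_re, Complex.mul_im,
          Complex.conj_re, Complex.conj_im, ha2] <;>
      nlinarith [hs]
    · refine ⟨⟨1/2, Real.sqrt (3/4 + a.re)⟩, ?_⟩
      have hs : Real.sqrt (3/4 + a.re) ^ 2 = 3/4 + a.re := Real.sq_sqrt (by linarith)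
      apply Complex.ext <;>
        simp [pow_two, Complex.add_re, Complex.add_im, Complex.mul_re, Complex.mul_im,
          Complex.conj_re, Complex.conj_im, ha2] <;>
        nlinarith [hs]
  · -- quartic case
    set a₁ := a.re
    set a₂ := a.im
    set g : ℝ → ℝ := fun x => (x^2 + x + a₁) * (1 - 2*x)^2 - a₂^2 with hg
    have hcont : ContinuousOn g (Set.Icc (1/2) (1 + |a₁| + |a₂|)) := by
      apply Continuous.continuousOn; fun_prop
    have hgh : g (1/2) < 0 := by
      simp only [hg]
      have h0 : (1 - 2*(1/2:ℝ))^2 = 0 := by norm_num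
      rw [h0]; nlinarith [abs_pos.2 ha2, _root_.sq_abs a₂]
    have hb : (1:ℝ)/2 ≤ 1 + |a₁| + |a₂| := by
      nlinarith [abs_nonneg a₁, abs_nonneg a₂]
    have hgb : 0 ≤ g (1 + |a₁| + |a₂|) := by
      simp only [hg]
      have h1 : |a₁| ≥ a₁ := le_abs_self a₁
      have h2 : |a₁| ≥ -a₁ := neg_le_abs a₁
      have h3 : |a₂| ≥ a₂ := le_abs_self a₂
      have h4 : |a₂| ≥ -a₂ := neg_le_abs a₂
      have h5 : |a₁| ≥ 0 := abs_nonneg a₁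
      have h6 : |a₂| ≥ 0 := abs_nonneg a₂
      nlinarith [sq_nonneg (1 + |a₁| + |a₂|), sq_nonneg (|a₁| + |a₂|)]
    have hmem : (0:ℝ) ∈ Set.Icc (g (1/2)) (g (1 + |a₁| + |a₂|)) := ⟨le_of_lt hgh, hgb⟩
    obtain ⟨x₀, hx₀mem, hx₀⟩ := intermediate_value_Icc hb hcont hmem
    have hne : (1 - 2*x₀) ≠ 0 := by
      intro h
      have : x₀ = 1/2 := by linarith
      rw [this] at hx₀; linarith [hgh, hx₀.symm.le]
    refine ⟨⟨x₀, a₂ / (1 - 2*x₀)⟩, ?_⟩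
    have him : (a₂ / (1 - 2*x₀)) * (2*x₀ - 1) + a₂ = 0 := by field_simp; ring
    have hre : x₀^2 - (a₂ / (1 - 2*x₀))^2 + x₀ + a₁ = 0 := by
      have hg0 : (x₀^2 + x₀ + a₁) * (1 - 2*x₀)^2 - a₂^2 = 0 := hx₀
      have hsq : (1 - 2*x₀)^2 ≠ 0 := pow_ne_zero 2 hne
      have : x₀^2 - (a₂ / (1 - 2*x₀))^2 + x₀ + a₁
          = ((x₀^2 + x₀ + a₁) * (1 - 2*x₀)^2 - a₂^2) / (1 - 2*x₀)^2 := by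
        rw [div_pow, sub_div, mul_div_cancel_right₀ _ hsq]; ring
      rw [this, hg0, zero_div]
    apply Complex.ext <;>
      simp [pow_two, Complex.add_re, Complex.add_im, Complex.mul_re, Complex.mul_im,
        Complex.conj_re, Complex.conj_im] <;>
      nlinarith [hre, him]

lemma aux_sqrt (c : ℂ) : ∃ z : ℂ, z^2 = c := by
  refine ⟨c ^ ((2:ℕ):ℂ)⁻¹, ?_⟩
  exact_mod_cast Complex.cpow_nat_inv_pow c two_ne_zero

lemma aux_L2 (Q c : ℂ) : ∃ z : ℂ, z^2 + Q * (starRingEnd ℂ) z + c = 0 := by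
  by_cases hQ : Q = 0
  · obtain ⟨z, hz⟩ := aux_sqrt (-c)
    exact ⟨z, by rw [hQ, hz]; ring⟩
  · set ω : ℂ := Q ^ ((3:ℕ):ℂ)⁻¹ with hω
    have hω3 : ω^3 = Q := by exact_mod_cast Complex.cpow_nat_inv_pow Q three_ne_zero
    have hωne : ω ≠ 0 := by
      intro h; apply hQ; rw [← hω3, h]; ring
    set r : ℝ := Complex.normSq ω with hr
    have hrpos : 0 < r := normSq_pos.2 hωne
    have hrne : (r:ℂ) ≠ 0 := by exact_mod_cast ne_of_gt hrpos
    obtain ⟨ξ, hξ⟩ := aux_L1 (c / (ω^2 * (r:ℂ)^2))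
    refine ⟨ω * (r:ℂ) * ξ, ?_⟩
    have hconj : (starRingEnd ℂ) (ω * (r:ℂ) * ξ) = (starRingEnd ℂ) ω * (r:ℂ) * (starRingEnd ℂ) ξ := by
      simp [_root_.map_mul, Complex.conj_ofReal]
    have hmc : ω * (starRingEnd ℂ) ω = (r:ℂ) := by
      rw [Complex.mul_conj]
    calc (ω * (r:ℂ) * ξ)^2 + Q * (starRingEnd ℂ) (ω * (r:ℂ) * ξ) + c
        = ω^2 * (r:ℂ)^2 * ξ^2 + (ω^3 * (starRingEnd ℂ) ω) * (r:ℂ) * (starRingEnd ℂ) ξ + c := by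
          rw [hconj, hω3]; ring
      _ = ω^2 * (r:ℂ)^2 * (ξ^2 + (starRingEnd ℂ) ξ + c / (ω^2 * (r:ℂ)^2)) := by
          have : ω^3 * (starRingEnd ℂ) ω = ω^2 * (r:ℂ) := by rw [← hmc]; ring
          rw [this]; field_simp
      _ = 0 := by rw [hξ, mul_zero]

lemma aux_L3 (p Q c : ℂ) : ∃ z : ℂ, z^2 + p*z + Q * (starRingEnd ℂ) z + c = 0 := by
  obtain ⟨ζ, hζ⟩ := aux_L2 Q (c - p^2/4 - Q * (starRingEnd ℂ) p / 2)
  refine ⟨ζ - p/2, ?_⟩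
  have hconj : (starRingEnd ℂ) (ζ - p/2) = (starRingEnd ℂ) ζ - (starRingEnd ℂ) p / 2 := by
    simp [map_sub, map_div₀, map_ofNat]
  rw [hconj]
  linear_combination hζ

variable {n : ℕ}

lemma dot_symm {A : Matrix (Fin n) (Fin n) ℝ} (hA : A.IsSymm) (x y : Fin n → ℝ) :
    x ⬝ᵥ A.mulVec y = y ⬝ᵥ A.mulVec x := by
  nth_rewrite 1 [← hA.eq]
  rw [Matrix.dotProduct_mulVec, Matrix.vecMul_transpose, dotProduct_comm]

lemma quad_add {A : Matrix (Fin n) (Fin n) ℝ} (hA : A.IsSymm) (x y : Fin n → ℝ) :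
    (x + y) ⬝ᵥ A.mulVec (x + y)
      = x ⬝ᵥ A.mulVec x + 2 * (x ⬝ᵥ A.mulVec y) + y ⬝ᵥ A.mulVec y := by
  rw [Matrix.mulVec_add, add_dotProduct, dotProduct_add,
    dotProduct_add, dot_symm hA y x]
  ring

lemma quad_smul (A : Matrix (Fin n) (Fin n) ℝ) (c : ℝ) (x : Fin n → ℝ) :
    (c • x) ⬝ᵥ A.mulVec (c • x) = c^2 * (x ⬝ᵥ A.mulVec x) := by
  rw [Matrix.mulVec_smul, smul_dotProduct, dotProduct_smul]
  simp [smul_eq_mul]; ring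

lemma bilin_smul_left (A : Matrix (Fin n) (Fin n) ℝ) (c : ℝ) (x y : Fin n → ℝ) :
    (c • x) ⬝ᵥ A.mulVec y = c * (x ⬝ᵥ A.mulVec y) := by
  rw [smul_dotProduct]; simp [smul_eq_mul]

lemma bilin_smul_right (A : Matrix (Fin n) (Fin n) ℝ) (c : ℝ) (x y : Fin n → ℝ) :
    x ⬝ᵥ A.mulVec (c • y) = c * (x ⬝ᵥ A.mulVec y) := by
  rw [Matrix.mulVec_smul, dotProduct_smul]; simp [smul_eq_mul]

lemma bilin_add_right (A : Matrix (Fin n) (Fin n) ℝ) (x y z : Fin n → ℝ) :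
    x ⬝ᵥ A.mulVec (y + z) = x ⬝ᵥ A.mulVec y + x ⬝ᵥ A.mulVec z := by
  rw [Matrix.mulVec_add, dotProduct_add]

lemma bilin_add_left (A : Matrix (Fin n) (Fin n) ℝ) (x y z : Fin n → ℝ) :
    (x + y) ⬝ᵥ A.mulVec z = x ⬝ᵥ A.mulVec z + y ⬝ᵥ A.mulVec z := by
  rw [add_dotProduct]

-- isotropic vector of a traceless symmetric 2x2 form
lemma iso2 (c d : ℝ) : ∃ s t : ℝ, ¬(s = 0 ∧ t = 0) ∧ c*(s^2-t^2) + 2*d*s*t = 0 := by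
  by_cases hc : c = 0
  · exact ⟨1, 0, by simp, by simp [hc]⟩
  · refine ⟨-d + Real.sqrt (d^2 + c^2), c, fun h => hc h.2, ?_⟩
    have hs : Real.sqrt (d^2 + c^2) ^ 2 = d^2 + c^2 := Real.sq_sqrt (by positivity)
    linear_combination c * hs

variable {n : ℕ}

lemma quad_comb {A : Matrix (Fin n) (Fin n) ℝ} (hA : A.IsSymm) (s t : ℝ) (x y : Fin n → ℝ) :
    (s • x + t • y) ⬝ᵥ A.mulVec (s • x + t • y)
      = s^2 * (x ⬝ᵥ A.mulVec x) + 2*s*t*(x ⬝ᵥ A.mulVec y) + t^2 * (y ⬝ᵥ A.mulVec y) := by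
  rw [quad_add hA, quad_smul, quad_smul, bilin_smul_left, bilin_smul_right]
  ring

lemma comb_quad (a b : ℝ) (A B : Matrix (Fin n) (Fin n) ℝ) (x y : Fin n → ℝ) :
    x ⬝ᵥ (a • A + b • B).mulVec y = a * (x ⬝ᵥ A.mulVec y) + b * (x ⬝ᵥ B.mulVec y) := by
  rw [Matrix.add_mulVec, dotProduct_add, Matrix.smul_mulVec,
    Matrix.smul_mulVec, dotProduct_smul, dotProduct_smul]
  simp [smul_eq_mul]

lemma comb_symm {A B : Matrix (Fin n) (Fin n) ℝ} (hA : A.IsSymm) (hB : B.IsSymm) (a b : ℝ) :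
    (a • A + b • B).IsSymm := by
  unfold Matrix.IsSymm at *
  rw [Matrix.transpose_add, Matrix.transpose_smul, Matrix.transpose_smul, hA, hB]

lemma nonzero_comb {u₀ u₁ : Fin n → ℝ} (hind : LinearIndependent ℝ ![u₀, u₁])
    {s t : ℝ} (hst : ¬(s = 0 ∧ t = 0)) : s • u₀ + t • u₁ ≠ 0 := by
  intro h
  have := (Fintype.linearIndependent_iff.mp hind) ![s, t] ?_
  · exact hst ⟨this 0, this 1⟩
  · rw [Fin.sum_univ_two]; simpa using h

lemma exists_outside {V : Submodule ℝ (Fin n → ℝ)} (hdim : 3 ≤ Module.finrank ℝ V)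
    (u₀ u₁ : Fin n → ℝ) : ∃ w ∈ V, w ∉ Submodule.span ℝ {u₀, u₁} := by
  by_contra h
  push_neg at h
  have hle : V ≤ Submodule.span ℝ {u₀, u₁} := h
  have h2 : Module.finrank ℝ (Submodule.span ℝ ({u₀, u₁} : Set (Fin n → ℝ))) ≤ 2 := by
    have := finrank_span_le_card (R := ℝ) ({u₀, u₁} : Set (Fin n → ℝ))
    refine le_trans this ?_
    rw [Set.toFinset_insert, Set.toFinset_singleton]
    exact le_trans (Finset.card_insert_le _ _) (by simp)
  have := Submodule.finrank_mono hle
  omega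

lemma base2 {A₁ A₂ : Matrix (Fin n) (Fin n) ℝ}
    (hA₁ : A₁.IsSymm) (hA₂ : A₂.IsSymm)
    {V : Submodule ℝ (Fin n → ℝ)} (hdim : 3 ≤ Module.finrank ℝ V)
    (u₀ u₁ : Fin n → ℝ) (hind : LinearIndependent ℝ ![u₀, u₁])
    (h₀ : u₀ ∈ V) (h₁ : u₁ ∈ V)
    (e₁ : u₀ ⬝ᵥ A₁.mulVec u₀ + u₁ ⬝ᵥ A₁.mulVec u₁ = 0)
    (e₂ : u₀ ⬝ᵥ A₂.mulVec u₀ + u₁ ⬝ᵥ A₂.mulVec u₁ = 0) :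
    ∃ x : Fin n → ℝ, x ≠ 0 ∧ x ∈ V ∧ x ⬝ᵥ A₁.mulVec x = 0 ∧ x ⬝ᵥ A₂.mulVec x = 0 := by
  set S11 := u₀ ⬝ᵥ A₁.mulVec u₀ with hS11d
  set S12 := u₀ ⬝ᵥ A₁.mulVec u₁ with hS12d
  set T11 := u₀ ⬝ᵥ A₂.mulVec u₀ with hT11d
  set T12 := u₀ ⬝ᵥ A₂.mulVec u₁ with hT12d
  have hS22 : u₁ ⬝ᵥ A₁.mulVec u₁ = -S11 := by linarith
  have hT22 : u₁ ⬝ᵥ A₂.mulVec u₁ = -T11 := by linarith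
  by_cases hD : S11 * T12 - S12 * T11 = 0
  · -- degenerate case: common isotropic vector inside the span
    have key : ∃ s t : ℝ, ¬(s = 0 ∧ t = 0) ∧ S11*(s^2-t^2) + 2*S12*s*t = 0 ∧
        T11*(s^2-t^2) + 2*T12*s*t = 0 := by
      by_cases hS : S11 = 0 ∧ S12 = 0
      · obtain ⟨s, t, hst, hT⟩ := iso2 T11 T12
        exact ⟨s, t, hst, by rw [hS.1, hS.2]; ring, hT⟩
      · obtain ⟨s, t, hst, hSv⟩ := iso2 S11 S12
        refine ⟨s, t, hst, hSv, ?_⟩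
        by_cases hS11 : S11 = 0
        · have hS12 : S12 ≠ 0 := fun h => hS ⟨hS11, h⟩
          have hT11 : T11 = 0 := by
            have : S12 * T11 = 0 := by rw [hS11] at hD; linarith
            exact (mul_eq_zero.mp this).resolve_left hS12
          have hst0 : s * t = 0 := by
            rw [hS11] at hSv
            have : S12 * (s*t) = 0 := by linarith
            exact (mul_eq_zero.mp this).resolve_left hS12
          rw [hT11]
          linear_combination 2*T12*hst0
        · have h' : S11 * (T11*(s^2-t^2) + 2*T12*s*t) = 0 := by
            linear_combination T11 * hSv + 2*s*t*hD
          exact (mul_eq_zero.mp h').resolve_left hS11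
    obtain ⟨s, t, hst, hQ1, hQ2⟩ := key
    refine ⟨s • u₀ + t • u₁, nonzero_comb hind hst,
      V.add_mem (V.smul_mem _ h₀) (V.smul_mem _ h₁), ?_, ?_⟩
    · rw [quad_comb hA₁, hS22]; linarith [hQ1]
    · rw [quad_comb hA₂, hT22]; linarith [hQ2]
  · -- nondegenerate case: analytic argument
    set D := S11 * T12 - S12 * T11 with hDdef
    set A'₁ := (T12/D) • A₁ + (-S12/D) • A₂ with hA'₁d
    set A'₂ := (-T11/D) • A₁ + (S11/D) • A₂ with hA'₂d
    have sy₁ : A'₁.IsSymm := comb_symm hA₁ hA₂ _ _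
    have sy₂ : A'₂.IsSymm := comb_symm hA₁ hA₂ _ _
    have g1 : u₀ ⬝ᵥ A'₁.mulVec u₀ = 1 := by
      rw [hA'₁d, comb_quad, ← hS11d, ← hT11d]; field_simp; ring
    have g2 : u₁ ⬝ᵥ A'₁.mulVec u₁ = -1 := by
      rw [hA'₁d, comb_quad, hS22, hT22]; field_simp; ring
    have g3 : u₀ ⬝ᵥ A'₁.mulVec u₁ = 0 := by
      rw [hA'₁d, comb_quad, ← hS12d, ← hT12d]; field_simp; ring
    have g4 : u₀ ⬝ᵥ A'₂.mulVec u₀ = 0 := by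
      rw [hA'₂d, comb_quad, ← hS11d, ← hT11d]; field_simp; ring
    have g5 : u₁ ⬝ᵥ A'₂.mulVec u₁ = 0 := by
      rw [hA'₂d, comb_quad, hS22, hT22]; field_simp; ring
    have g6 : u₀ ⬝ᵥ A'₂.mulVec u₁ = 1 := by
      rw [hA'₂d, comb_quad, ← hS12d, ← hT12d]; field_simp; ring
    obtain ⟨w, hwV, hwspan⟩ := exists_outside hdim u₀ u₁
    set γ₁ := w ⬝ᵥ A'₁.mulVec u₀ with hγ₁
    set δ₁ := w ⬝ᵥ A'₁.mulVec u₁ with hδ₁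
    set γ₂ := w ⬝ᵥ A'₂.mulVec u₀ with hγ₂
    set δ₂ := w ⬝ᵥ A'₂.mulVec u₁ with hδ₂
    set c₁ := w ⬝ᵥ A'₁.mulVec w with hc₁
    set c₂ := w ⬝ᵥ A'₂.mulVec w with hc₂
    obtain ⟨z, hz⟩ := aux_L3 ⟨γ₁+δ₂, γ₂-δ₁⟩ ⟨γ₁-δ₂, γ₂+δ₁⟩ ⟨c₁, c₂⟩
    set s := z.re with hs
    set t := z.im with ht
    have hre : s^2 - t^2 + 2*γ₁*s + 2*δ₁*t + c₁ = 0 := by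
      have h := congrArg Complex.re hz
      simp [pow_two, Complex.add_re, Complex.mul_re, Complex.mul_im,
        Complex.conj_re, Complex.conj_im, ← hs, ← ht] at h
      linarith [h]
    have him : 2*s*t + 2*γ₂*s + 2*δ₂*t + c₂ = 0 := by
      have h := congrArg Complex.im hz
      simp [pow_two, Complex.add_im, Complex.mul_re, Complex.mul_im,
        Complex.conj_re, Complex.conj_im, ← hs, ← ht] at h
      linarith [h]
    set x := w + (s • u₀ + t • u₁) with hxd
    have hxV : x ∈ V := V.add_mem hwV (V.add_mem (V.smul_mem _ h₀) (V.smul_mem _ h₁))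
    have hxne : x ≠ 0 := by
      intro h
      apply hwspan
      have : w = -(s • u₀ + t • u₁) := by
        rw [hxd] at h
        linear_combination (norm := abel) h
      rw [this]
      apply Submodule.neg_mem
      exact Submodule.add_mem _
        (Submodule.smul_mem _ _ (Submodule.subset_span (by simp)))
        (Submodule.smul_mem _ _ (Submodule.subset_span (by simp)))
    have hq'₁ : x ⬝ᵥ A'₁.mulVec x = 0 := by
      rw [hxd, quad_add sy₁, quad_comb sy₁, bilin_add_right, bilin_smul_right,
        bilin_smul_right, g1, g2, g3, ← hγ₁, ← hδ₁, ← hc₁]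
      linarith [hre]
    have hq'₂ : x ⬝ᵥ A'₂.mulVec x = 0 := by
      rw [hxd, quad_add sy₂, quad_comb sy₂, bilin_add_right, bilin_smul_right,
        bilin_smul_right, g4, g5, g6, ← hγ₂, ← hδ₂, ← hc₂]
      linarith [him]
    set q1 := x ⬝ᵥ A₁.mulVec x with hq1d
    set q2 := x ⬝ᵥ A₂.mulVec x with hq2d
    have E1 : T12/D * q1 + (-S12/D) * q2 = 0 := by
      rw [hq1d, hq2d, ← comb_quad, ← hA'₁d]; exact hq'₁
    have E2 : -T11/D * q1 + S11/D * q2 = 0 := by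
      rw [hq1d, hq2d, ← comb_quad, ← hA'₂d]; exact hq'₂
    have F1 : T12 * q1 - S12 * q2 = 0 := by
      have h : T12 * q1 - S12 * q2 = D * (T12/D * q1 + (-S12/D) * q2) := by
        field_simp
        ring
      rw [E1, mul_zero] at h; exact h
    have F2 : -(T11 * q1) + S11 * q2 = 0 := by
      have h : -(T11 * q1) + S11 * q2 = D * (-T11/D * q1 + (S11/D) * q2) := by
        field_simp
      rw [E2, mul_zero] at h; exact h
    have hq1 : q1 = 0 := by
      have : D * q1 = 0 := by rw [hDdef]; linear_combination S11 * F1 + S12 * F2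
      exact (mul_eq_zero.mp this).resolve_left hD
    have hq2 : q2 = 0 := by
      have : D * q2 = 0 := by rw [hDdef]; linear_combination T11 * F1 + T12 * F2
      exact (mul_eq_zero.mp this).resolve_left hD
    exact ⟨x, hxne, hxV, hq1, hq2⟩

variable {n : ℕ}

lemma diagstep {A₁ A₂ : Matrix (Fin n) (Fin n) ℝ} {V : Submodule ℝ (Fin n → ℝ)}
    {k : ℕ} (u : Fin k → (Fin n → ℝ)) (hind : LinearIndependent ℝ u)
    (hmem : ∀ j, u j ∈ V)
    (hs1 : ∑ j, u j ⬝ᵥ A₁.mulVec (u j) = 0) (hs2 : ∑ j, u j ⬝ᵥ A₂.mulVec (u j) = 0)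
    (d : Fin k → ℝ) (hd0 : d ≠ 0) (hdsum : ∑ j, d j = 0)
    (hd1 : ∑ j, d j * (u j ⬝ᵥ A₁.mulVec (u j)) = 0)
    (hd2 : ∑ j, d j * (u j ⬝ᵥ A₂.mulVec (u j)) = 0) :
    ∃ m, 0 < m ∧ m < k ∧ ∃ v : Fin m → (Fin n → ℝ), LinearIndependent ℝ v ∧
      (∀ j, v j ∈ V) ∧ (∑ j, v j ⬝ᵥ A₁.mulVec (v j)) = 0 ∧
      (∑ j, v j ⬝ᵥ A₂.mulVec (v j)) = 0 := by
  have hne : ∃ j, d j ≠ 0 := by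
    by_contra h; push_neg at h; exact hd0 (funext h)
  obtain ⟨jp, hjp⟩ := hne
  have hkpos : 0 < k := jp.pos
  -- there is a positive entry
  have hpos : ∃ j, 0 < d j := by
    by_contra h
    push_neg at h
    have := (Finset.sum_eq_zero_iff_of_nonpos (fun i _ => h i)).mp hdsum
    exact hjp (this jp (Finset.mem_univ jp))
  obtain ⟨jq, hjq⟩ := hpos
  obtain ⟨jm, -, hmax⟩ := Finset.exists_max_image Finset.univ d ⟨jq, Finset.mem_univ jq⟩
  set dM := d jm with hdM
  have hdMpos : 0 < dM := lt_of_lt_of_le hjq (hmax jq (Finset.mem_univ jq))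
  set ν : Fin k → ℝ := fun j => 1 - d j / dM with hν
  have hν0 : ∀ j, 0 ≤ ν j := by
    intro j
    have := hmax j (Finset.mem_univ j)
    have : d j / dM ≤ 1 := by
      rw [div_le_one hdMpos]; exact this
    simp only [hν]; linarith
  have hνm : ν jm = 0 := by simp only [hν]; rw [← hdM, div_self (ne_of_gt hdMpos), sub_self]
  set L : Finset (Fin k) := Finset.univ.filter (fun j => ν j ≠ 0) with hL
  set m := L.card with hm
  have hmlt : m < k := by
    have hsub : L ⊆ Finset.univ.erase jm := by
      intro j hj
      rw [Finset.mem_erase]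
      refine ⟨?_, Finset.mem_univ j⟩
      intro h
      rw [hL, Finset.mem_filter] at hj
      exact hj.2 (h ▸ hνm)
    calc m ≤ (Finset.univ.erase jm).card := Finset.card_le_card hsub
      _ = k - 1 := by rw [Finset.card_erase_of_mem (Finset.mem_univ jm)]; simp
      _ < k := by omega
  have hmpos : 0 < m := by
    have : ∃ j, ν j ≠ 0 := by
      by_contra h
      push_neg at h
      have hall : ∀ j, d j = dM := by
        intro j
        have := h j
        simp only [hν] at this
        have : d j / dM = 1 := by linarith
        field_simp at this
        exact this
      have : ∑ j, d j = k * dM := by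
        rw [Finset.sum_congr rfl (fun j _ => hall j)]
        simp [Finset.card_univ]
      rw [hdsum] at this
      have : (k : ℝ) * dM = 0 := this.symm
      rcases mul_eq_zero.mp this with h' | h'
      · exact absurd h' (by positivity)
      · exact absurd h' (ne_of_gt hdMpos)
    obtain ⟨j, hj⟩ := this
    have : j ∈ L := by rw [hL, Finset.mem_filter]; exact ⟨Finset.mem_univ j, hj⟩
    exact Finset.card_pos.mpr ⟨j, this⟩
  -- the new family
  set f : {j // j ∈ L} → (Fin n → ℝ) := fun l => Real.sqrt (ν l.1) • u l.1 with hf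
  have hνpos : ∀ l : {j // j ∈ L}, 0 < ν l.1 := fun l =>
    lt_of_le_of_ne (hν0 l.1) (Ne.symm (Finset.mem_filter.mp l.2).2)
  have hfind : LinearIndependent ℝ f := by
    have h1 : LinearIndependent ℝ (fun l : {j // j ∈ L} => u l.1) :=
      hind.comp Subtype.val Subtype.val_injective
    have h2 := h1.units_smul (fun l => Units.mk0 (Real.sqrt (ν l.1))
      (ne_of_gt (Real.sqrt_pos.mpr (hνpos l))))
    convert h2 using 1
    ext l i; rfl
  have hq : ∀ (A : Matrix (Fin n) (Fin n) ℝ), (∑ j, u j ⬝ᵥ A.mulVec (u j)) = 0 →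
      (∑ j, d j * (u j ⬝ᵥ A.mulVec (u j))) = 0 →
      ∑ l : {j // j ∈ L}, (f l) ⬝ᵥ A.mulVec (f l) = 0 := by
    intro A hsA hdA
    have e1 : ∀ l : {j // j ∈ L}, (f l) ⬝ᵥ A.mulVec (f l) = ν l.1 * (u l.1 ⬝ᵥ A.mulVec (u l.1)) := by
      intro l
      rw [hf]
      simp only
      rw [quad_smul, Real.sq_sqrt (hν0 l.1)]
    rw [Finset.sum_congr rfl (fun l _ => e1 l)]
    rw [Finset.sum_coe_sort L (fun j => ν j * (u j ⬝ᵥ A.mulVec (u j)))]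
    have e2 : ∑ j ∈ L, ν j * (u j ⬝ᵥ A.mulVec (u j))
        = ∑ j, ν j * (u j ⬝ᵥ A.mulVec (u j)) := by
      rw [hL]
      apply Finset.sum_filter_of_ne
      intro j _ hne hν0'
      exact hne (by rw [hν0']; ring)
    rw [e2]
    have e3 : ∑ j, ν j * (u j ⬝ᵥ A.mulVec (u j))
        = (∑ j, u j ⬝ᵥ A.mulVec (u j)) - (∑ j, d j * (u j ⬝ᵥ A.mulVec (u j))) / dM := by
      rw [Finset.sum_div, ← Finset.sum_sub_distrib]
      apply Finset.sum_congr rfl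
      intro j _
      simp only [hν]
      field_simp
    rw [e3, hsA, hdA]
    simp
  -- reindex by Fin m
  set e := L.equivFin with he
  refine ⟨m, hmpos, hmlt, fun i => f (e.symm i), hfind.comp e.symm e.symm.injective, ?_, ?_, ?_⟩
  · intro i
    exact V.smul_mem _ (hmem _)
  · rw [Equiv.sum_comp e.symm (fun l => (f l) ⬝ᵥ A₁.mulVec (f l))]
    exact hq A₁ hs1 hd1
  · rw [Equiv.sum_comp e.symm (fun l => (f l) ⬝ᵥ A₂.mulVec (f l))]
    exact hq A₂ hs2 hd2

variable {n : ℕ}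

lemma key {A₁ A₂ : Matrix (Fin n) (Fin n) ℝ} (hA₁ : A₁.IsSymm) (hA₂ : A₂.IsSymm)
    {V : Submodule ℝ (Fin n → ℝ)} (hdim : 3 ≤ Module.finrank ℝ V) :
    ∀ k, 0 < k → ∀ u : Fin k → (Fin n → ℝ), LinearIndependent ℝ u → (∀ j, u j ∈ V) →
    (∑ j, u j ⬝ᵥ A₁.mulVec (u j)) = 0 → (∑ j, u j ⬝ᵥ A₂.mulVec (u j)) = 0 →
    ∃ x : Fin n → ℝ, x ≠ 0 ∧ x ∈ V ∧ x ⬝ᵥ A₁.mulVec x = 0 ∧ x ⬝ᵥ A₂.mulVec x = 0 := by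
  intro k
  induction k using Nat.strong_induction_on with
  | _ k IH =>
  intro hk u hind hmem hs1 hs2
  match k, hk with
  | 1, _ =>
    refine ⟨u 0, hind.ne_zero 0, hmem 0, ?_, ?_⟩
    · simpa [Fin.sum_univ_one] using hs1
    · simpa [Fin.sum_univ_one] using hs2
  | 2, _ =>
    have hvec : ![u 0, u 1] = u := by
      funext j; fin_cases j <;> rfl
    refine base2 hA₁ hA₂ hdim (u 0) (u 1) (hvec ▸ hind) (hmem 0) (hmem 1) ?_ ?_
    · simpa [Fin.sum_univ_two] using hs1
    · simpa [Fin.sum_univ_two] using hs2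
  | 3, _ =>
    have hsa : u 0 ⬝ᵥ A₁.mulVec (u 0) + u 1 ⬝ᵥ A₁.mulVec (u 1) + u 2 ⬝ᵥ A₁.mulVec (u 2) = 0 := by
      simpa [Fin.sum_univ_three] using hs1
    have hsb : u 0 ⬝ᵥ A₂.mulVec (u 0) + u 1 ⬝ᵥ A₂.mulVec (u 1) + u 2 ⬝ᵥ A₂.mulVec (u 2) = 0 := by
      simpa [Fin.sum_univ_three] using hs2
    set a0 := u 0 ⬝ᵥ A₁.mulVec (u 0) with ha0
    set a1 := u 1 ⬝ᵥ A₁.mulVec (u 1) with ha1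
    set a2 := u 2 ⬝ᵥ A₁.mulVec (u 2) with ha2
    set b0 := u 0 ⬝ᵥ A₂.mulVec (u 0) with hb0
    set b1 := u 1 ⬝ᵥ A₂.mulVec (u 1) with hb1
    set b2 := u 2 ⬝ᵥ A₂.mulVec (u 2) with hb2
    set e1 := u 0 ⬝ᵥ A₁.mulVec (u 1) with he1
    set e2 := u 0 ⬝ᵥ A₂.mulVec (u 1) with he2
    set X0 : ℝ → ℝ := fun θ =>
      (Real.cos θ)^2 * a0 + 2*(Real.cos θ)*(Real.sin θ)*e1 + (Real.sin θ)^2 * a1 with hX0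
    set X1 : ℝ → ℝ := fun θ =>
      (Real.sin θ)^2 * a0 - 2*(Real.sin θ)*(Real.cos θ)*e1 + (Real.cos θ)^2 * a1 with hX1
    set Y0 : ℝ → ℝ := fun θ =>
      (Real.cos θ)^2 * b0 + 2*(Real.cos θ)*(Real.sin θ)*e2 + (Real.sin θ)^2 * b1 with hY0
    set Y1 : ℝ → ℝ := fun θ =>
      (Real.sin θ)^2 * b0 - 2*(Real.sin θ)*(Real.cos θ)*e2 + (Real.cos θ)^2 * b1 with hY1
    set hf : ℝ → ℝ := fun θ =>
      (X1 θ - X0 θ) * (b2 - Y0 θ) - (a2 - X0 θ) * (Y1 θ - Y0 θ) with hhf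
    have hcont : Continuous hf := by
      simp only [hhf, hX0, hX1, hY0, hY1]
      fun_prop
    have hval : hf (Real.pi/2) = - hf 0 := by
      simp only [hhf, hX0, hX1, hY0, hY1, Real.cos_pi_div_two, Real.sin_pi_div_two,
        Real.cos_zero, Real.sin_zero]
      ring
    have hpi2 : (0:ℝ) ≤ Real.pi/2 := by positivity
    obtain ⟨θ, hθ⟩ : ∃ θ, hf θ = 0 := by
      rcases lt_trichotomy (hf 0) 0 with h0 | h0 | h0
      · have hmem : (0:ℝ) ∈ Set.Icc (hf 0) (hf (Real.pi/2)) := by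
          rw [hval]; constructor <;> linarith
        obtain ⟨θ, _, hθ⟩ := intermediate_value_Icc hpi2 hcont.continuousOn hmem
        exact ⟨θ, hθ⟩
      · exact ⟨0, h0⟩
      · have hmem : (0:ℝ) ∈ Set.Icc (hf (Real.pi/2)) (hf 0) := by
          rw [hval]; constructor <;> linarith
        obtain ⟨θ, _, hθ⟩ := intermediate_value_Icc' hpi2 hcont.continuousOn hmem
        exact ⟨θ, hθ⟩
    set c := Real.cos θ with hc
    set s := Real.sin θ with hsn
    have hpyth : s^2 + c^2 = 1 := Real.sin_sq_add_cos_sq θ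
    set v0 := c • u 0 + s • u 1 with hv0d
    set v1 := (-s) • u 0 + c • u 1 with hv1d
    set w : Fin 3 → (Fin n → ℝ) := ![v0, v1, u 2] with hw
    -- the quadratic values of the rotated vectors
    have hv0a : v0 ⬝ᵥ A₁.mulVec v0 = X0 θ := by
      rw [hv0d, quad_comb hA₁]
    have hv1a : v1 ⬝ᵥ A₁.mulVec v1 = X1 θ := by
      rw [hv1d, quad_comb hA₁]; simp only [hX1, ← ha0, ← ha1, ← he1]; ring
    have hv0b : v0 ⬝ᵥ A₂.mulVec v0 = Y0 θ := by
      rw [hv0d, quad_comb hA₂]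
    have hv1b : v1 ⬝ᵥ A₂.mulVec v1 = Y1 θ := by
      rw [hv1d, quad_comb hA₂]; simp only [hY1, ← hb0, ← hb1, ← he2]; ring
    have hwmem : ∀ j, w j ∈ V := by
      have m0 : v0 ∈ V := V.add_mem (V.smul_mem _ (hmem 0)) (V.smul_mem _ (hmem 1))
      have m1 : v1 ∈ V := V.add_mem (V.smul_mem _ (hmem 0)) (V.smul_mem _ (hmem 1))
      intro j
      fin_cases j
      · exact m0
      · exact m1
      · exact hmem 2
    have hwind : LinearIndependent ℝ w := by
      rw [Fintype.linearIndependent_iff]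
      intro g hg
      rw [Fin.sum_univ_three] at hg
      have hexp : ∑ j, (![g 0 * c - g 1 * s, g 0 * s + g 1 * c, g 2]) j • u j = 0 := by
        rw [Fin.sum_univ_three]
        simp only [Matrix.cons_val_zero, Matrix.cons_val_one, Matrix.head_cons,
          Matrix.cons_val_two, Matrix.tail_cons]
        have : g 0 • v0 + g 1 • v1 + g 2 • u 2
            = (g 0 * c - g 1 * s) • u 0 + (g 0 * s + g 1 * c) • u 1 + g 2 • u 2 := by
          rw [hv0d, hv1d]; module
        rw [← this]
        simpa only [hw, Matrix.cons_val_zero, Matrix.cons_val_one, Matrix.head_cons,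
          Matrix.cons_val_two, Matrix.tail_cons] using hg
      have hco := Fintype.linearIndependent_iff.mp hind _ hexp
      have h0 := hco 0
      have h1 := hco 1
      have h2 := hco 2
      simp only [Matrix.cons_val_zero, Matrix.cons_val_one, Matrix.head_cons,
        Matrix.cons_val_two, Matrix.tail_cons] at h0 h1 h2
      have hg0 : g 0 = 0 := by linear_combination c * h0 + s * h1 - g 0 * hpyth
      have hg1 : g 1 = 0 := by linear_combination (-s) * h0 + c * h1 - g 1 * hpyth
      intro i
      fin_cases i
      · exact hg0
      · exact hg1
      · exact h2
    have hws1 : ∑ j, w j ⬝ᵥ A₁.mulVec (w j) = 0 := by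
      rw [Fin.sum_univ_three]
      simp only [hw, Matrix.cons_val_zero, Matrix.cons_val_one, Matrix.head_cons,
        Matrix.cons_val_two, Matrix.tail_cons]
      rw [hv0a, hv1a]
      simp only [hX0, hX1]
      linear_combination hsa + (a0 + a1) * hpyth
    have hws2 : ∑ j, w j ⬝ᵥ A₂.mulVec (w j) = 0 := by
      rw [Fin.sum_univ_three]
      simp only [hw, Matrix.cons_val_zero, Matrix.cons_val_one, Matrix.head_cons,
        Matrix.cons_val_two, Matrix.tail_cons]
      rw [hv0b, hv1b]
      simp only [hY0, hY1]
      linear_combination hsb + (b0 + b1) * hpyth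
    -- construct the coefficient vector d from collinearity
    set p1 := X0 θ with hp1
    set p2 := Y0 θ with hp2
    set q1 := X1 θ with hq1
    set q2 := Y1 θ with hq2
    have hcol : (q1 - p1) * (b2 - p2) - (a2 - p1) * (q2 - p2) = 0 := by
      simpa only [hhf] using hθ
    have hdex : ∃ d : Fin 3 → ℝ, d ≠ 0 ∧ (∑ j, d j = 0) ∧
        (1*0 = 0 ∧ d 0 * p1 + d 1 * q1 + d 2 * a2 = 0 ∧ d 0 * p2 + d 1 * q2 + d 2 * b2 = 0) := by
      by_cases heq : q1 = p1 ∧ q2 = p2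
      · refine ⟨![1, -1, 0], ?_, by rw [Fin.sum_univ_three]; simp, by norm_num, ?_, ?_⟩
        · intro hcontr
          have := congrFun hcontr 0
          norm_num at this
        · simp [heq.1]
        · simp [heq.2]
      · have hden : 0 < (q1 - p1)^2 + (q2 - p2)^2 := by
          rcases not_and_or.mp heq with hne | hne
          · have : q1 - p1 ≠ 0 := fun h => hne (by linarith)
            positivity
          · have : q2 - p2 ≠ 0 := fun h => hne (by linarith)
            positivity
        set den := (q1 - p1)^2 + (q2 - p2)^2 with hdend
        set t := ((a2 - p1)*(q1 - p1) + (b2 - p2)*(q2 - p2)) / den with htd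
        have claim1 : a2 - p1 = t * (q1 - p1) := by
          rw [htd]
          field_simp
          linear_combination (-(q2 - p2)) * hcol
        have claim2 : b2 - p2 = t * (q2 - p2) := by
          rw [htd]
          field_simp
          linear_combination (q1 - p1) * hcol
        refine ⟨![1 - t, t, -1], ?_, by rw [Fin.sum_univ_three]; simp, by norm_num, ?_, ?_⟩
        · intro hcontr
          have := congrFun hcontr 2
          simp at this
        · simp only [Matrix.cons_val_zero, Matrix.cons_val_one, Matrix.head_cons,
            Matrix.cons_val_two, Matrix.tail_cons]
          linarith [claim1]
        · simp only [Matrix.cons_val_zero, Matrix.cons_val_one, Matrix.head_cons,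
            Matrix.cons_val_two, Matrix.tail_cons]
          linarith [claim2]
    obtain ⟨d, hd0, hdsum, -, hdp1, hdp2⟩ := hdex
    have hd1 : ∑ j, d j * (w j ⬝ᵥ A₁.mulVec (w j)) = 0 := by
      rw [Fin.sum_univ_three]
      simp only [hw, Matrix.cons_val_zero, Matrix.cons_val_one, Matrix.head_cons,
        Matrix.cons_val_two, Matrix.tail_cons]
      rw [hv0a, hv1a]
      exact hdp1
    have hd2 : ∑ j, d j * (w j ⬝ᵥ A₂.mulVec (w j)) = 0 := by
      rw [Fin.sum_univ_three]
      simp only [hw, Matrix.cons_val_zero, Matrix.cons_val_one, Matrix.head_cons,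
        Matrix.cons_val_two, Matrix.tail_cons]
      rw [hv0b, hv1b]
      exact hdp2
    obtain ⟨m', hm'pos, hm'lt, v, hvind, hvmem, hv1, hv2⟩ :=
      diagstep w hwind hwmem hws1 hws2 d hd0 hdsum hd1 hd2
    exact IH m' hm'lt hm'pos v hvind hvmem hv1 hv2
  | (m+4), _ =>
    -- kernel argument: find d
    set a : Fin (m+4) → ℝ := fun j => u j ⬝ᵥ A₁.mulVec (u j) with ha
    set b : Fin (m+4) → ℝ := fun j => u j ⬝ᵥ A₂.mulVec (u j) with hb
    set M : Matrix (Fin 3) (Fin (m+4)) ℝ := Matrix.of ![(fun _ => 1), a, b] with hM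
    have hnotinj : ¬ Function.Injective M.mulVecLin := by
      intro hinj
      have h1 := LinearMap.finrank_le_finrank_of_injective hinj
      rw [Module.finrank_pi, Module.finrank_pi] at h1
      simp [Fintype.card_fin] at h1
    obtain ⟨d₁, d₂, hde, hdne⟩ := Function.not_injective_iff.mp hnotinj
    set d : Fin (m+4) → ℝ := d₁ - d₂ with hd
    have hd0 : d ≠ 0 := fun h => hdne (by rwa [hd, sub_eq_zero] at h)
    have hker : M.mulVec d = 0 := by
      have : M.mulVecLin d₁ - M.mulVecLin d₂ = 0 := by rw [hde, sub_self]
      rw [← _root_.map_sub] at this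
      simpa [hd] using this
    have hrow : ∀ i : Fin 3, ∑ j, M i j * d j = 0 := by
      intro i
      have := congrFun hker i
      simpa [Matrix.mulVec, dotProduct] using this
    have hdsum : ∑ j, d j = 0 := by
      have := hrow 0
      simpa [hM] using this
    have hd1 : ∑ j, d j * a j = 0 := by
      have := hrow 1
      rw [← this]
      apply Finset.sum_congr rfl
      intro j _
      simp [hM]; ring
    have hd2 : ∑ j, d j * b j = 0 := by
      have := hrow 2
      rw [← this]
      apply Finset.sum_congr rfl
      intro j _
      simp [hM]; ring
    obtain ⟨m', hm'pos, hm'lt, v, hvind, hvmem, hv1, hv2⟩ :=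
      diagstep u hind hmem hs1 hs2 d hd0 hdsum hd1 hd2
    exact IH m' hm'lt hm'pos v hvind hvmem hv1 hv2

variable {n : ℕ}

lemma outer_decomp (U : Matrix (Fin n) (Fin n) ℝ) (c : Fin n → ℝ) :
    U * Matrix.diagonal c * Uᵀ
      = ∑ j, c j • Matrix.vecMulVec (fun i => U i j) (fun i => U i j) := by
  ext i l
  rw [Matrix.mul_apply]
  rw [Matrix.sum_apply]
  apply Finset.sum_congr rfl
  intro p _
  rw [Matrix.mul_diagonal, Matrix.transpose_apply, Matrix.smul_apply,
    Matrix.vecMulVec_apply]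
  simp [smul_eq_mul]
  ring

lemma trace_outer (A : Matrix (Fin n) (Fin n) ℝ) (v : Fin n → ℝ) :
    (A * Matrix.vecMulVec v v).trace = v ⬝ᵥ A.mulVec v := by
  rw [Matrix.trace]
  simp only [Matrix.diag_apply, Matrix.mul_apply, Matrix.vecMulVec_apply,
    dotProduct, Matrix.mulVec, Finset.mul_sum]
  apply Finset.sum_congr rfl
  intro i _
  apply Finset.sum_congr rfl
  intro p _
  ring

lemma vecMulVec_mulVec' (v w y : Fin n → ℝ) :
    (Matrix.vecMulVec v w).mulVec y = (w ⬝ᵥ y) • v := by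
  ext i
  simp only [Matrix.mulVec, Matrix.vecMulVec_apply, dotProduct, Pi.smul_apply,
    smul_eq_mul, Finset.sum_mul]
  apply Finset.sum_congr rfl
  intro p _
  ring

lemma sum_mulVec' {ι : Type*} (s : Finset ι) (M : ι → Matrix (Fin n) (Fin n) ℝ)
    (y : Fin n → ℝ) : (∑ l ∈ s, M l).mulVec y = ∑ l ∈ s, (M l).mulVec y := by
  ext i
  simp only [Matrix.mulVec, dotProduct, Finset.sum_apply, Matrix.sum_apply,
    Finset.sum_mul]
  rw [Finset.sum_comm]

lemma dotProduct_sum' {ι : Type*} (s : Finset ι) (v : Fin n → ℝ) (f : ι → (Fin n → ℝ)) :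
    v ⬝ᵥ (∑ l ∈ s, f l) = ∑ l ∈ s, v ⬝ᵥ (f l) := by
  simp only [dotProduct, Finset.sum_apply, Finset.mul_sum]
  rw [Finset.sum_comm]

theorem stmt_3 (n : ℕ) (A₁ A₂ X : Matrix (Fin n) (Fin n) ℝ)
    (hA₁ : A₁.IsSymm) (hA₂ : A₂.IsSymm)
    (hX : X.PosSemidef) (hX0 : X ≠ 0)
    (h1 : (A₁ * X).trace = 0) (h2 : (A₂ * X).trace = 0)
    (V : Submodule ℝ (Fin n → ℝ))
    (hrange : ∀ y : Fin n → ℝ, X.mulVec y ∈ V)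
    (hdim : 3 ≤ Module.finrank ℝ V) :
    ∃ x : Fin n → ℝ, x ≠ 0 ∧ x ∈ V ∧
      x ⬝ᵥ A₁.mulVec x = 0 ∧ x ⬝ᵥ A₂.mulVec x = 0 := by
  classical
  have hH : X.IsHermitian := hX.1
  set U : Matrix (Fin n) (Fin n) ℝ := (hH.eigenvectorUnitary : Matrix (Fin n) (Fin n) ℝ) with hU
  set μ : Fin n → ℝ := hH.eigenvalues with hμ
  have hμ0 : ∀ j, 0 ≤ μ j := fun j => hX.eigenvalues_nonneg j
  have hstar : star U = Uᵀ := by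
    rw [Matrix.star_eq_conjTranspose, Matrix.conjTranspose_eq_transpose_of_trivial]
  have hspec : X = U * Matrix.diagonal μ * Uᵀ := by
    have h := hH.spectral_theorem
    rw [Unitary.conjStarAlgAut_apply, ← hU, hstar] at h
    simpa [RCLike.ofReal_real_eq_id] using h
  have hUorth : Uᵀ * U = 1 := by
    have := hH.eigenvectorUnitary.2
    rw [Matrix.mem_unitaryGroup_iff'] at this
    rw [← hstar]
    exact this
  set v : Fin n → (Fin n → ℝ) := fun j => (fun i => U i j) with hv
  have hvv : ∀ l j, (v l) ⬝ᵥ (v j) = if l = j then 1 else 0 := by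
    intro l j
    have := congrFun (congrFun hUorth l) j
    rw [Matrix.mul_apply] at this
    rw [← Matrix.one_apply (i := l) (j := j), ← this]
    apply Finset.sum_congr rfl
    intro p _
    rw [Matrix.transpose_apply]
  have hXdecomp : X = ∑ j, μ j • Matrix.vecMulVec (v j) (v j) := by
    rw [hspec, outer_decomp]
  have htr : ∀ A : Matrix (Fin n) (Fin n) ℝ,
      (A * X).trace = ∑ j, μ j * ((v j) ⬝ᵥ A.mulVec (v j)) := by
    intro A
    rw [hXdecomp, Matrix.mul_sum, Matrix.trace_sum]
    apply Finset.sum_congr rfl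
    intro j _
    rw [Matrix.mul_smul, Matrix.trace_smul, trace_outer]
    simp [smul_eq_mul]
  have hXv : ∀ j, X.mulVec (v j) = μ j • v j := by
    intro j
    rw [hXdecomp]
    rw [sum_mulVec']
    have : ∀ l, (μ l • Matrix.vecMulVec (v l) (v l)).mulVec (v j)
        = (μ l * if l = j then 1 else 0) • v l := by
      intro l
      rw [Matrix.smul_mulVec, vecMulVec_mulVec', hvv l j, smul_smul]
    rw [Finset.sum_congr rfl (fun l _ => this l)]
    rw [Finset.sum_eq_single j]
    · simp
    · intro l _ hl
      simp [hl]
    · intro h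
      exact absurd (Finset.mem_univ j) h
  have hvV : ∀ j, μ j ≠ 0 → v j ∈ V := by
    intro j hj
    have h := hrange ((μ j)⁻¹ • v j)
    rwa [Matrix.mulVec_smul, hXv j, smul_smul, inv_mul_cancel₀ hj, one_smul] at h
  have hex : ∃ j, μ j ≠ 0 := by
    by_contra h
    push_neg at h
    apply hX0
    rw [hXdecomp]
    apply Finset.sum_eq_zero
    intro j _
    rw [h j, zero_smul]
  set J : Finset (Fin n) := Finset.univ.filter (fun j => μ j ≠ 0) with hJ
  have hJne : J.Nonempty := by
    obtain ⟨j, hj⟩ := hex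
    exact ⟨j, by rw [hJ, Finset.mem_filter]; exact ⟨Finset.mem_univ j, hj⟩⟩
  set k := J.card with hk
  have hkpos : 0 < k := Finset.card_pos.mpr hJne
  have hμpos : ∀ l : {j // j ∈ J}, 0 < μ l.1 := fun l =>
    lt_of_le_of_ne (hμ0 l.1) (Ne.symm (Finset.mem_filter.mp l.2).2)
  set w : {j // j ∈ J} → (Fin n → ℝ) := fun l => Real.sqrt (μ l.1) • v l.1 with hw
  have hwmem : ∀ l, w l ∈ V :=
    fun l => V.smul_mem _ (hvV l.1 (Finset.mem_filter.mp l.2).2)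
  have hwsum : ∀ A : Matrix (Fin n) (Fin n) ℝ, (A * X).trace = 0 →
      ∑ l : {j // j ∈ J}, (w l) ⬝ᵥ A.mulVec (w l) = 0 := by
    intro A hA
    have e1 : ∀ l : {j // j ∈ J}, (w l) ⬝ᵥ A.mulVec (w l)
        = μ l.1 * ((v l.1) ⬝ᵥ A.mulVec (v l.1)) := by
      intro l
      rw [hw]
      simp only
      rw [quad_smul, Real.sq_sqrt (hμ0 l.1)]
    rw [Finset.sum_congr rfl (fun l _ => e1 l)]
    rw [Finset.sum_coe_sort J (fun j => μ j * ((v j) ⬝ᵥ A.mulVec (v j)))]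
    have e2 : ∑ j ∈ J, μ j * ((v j) ⬝ᵥ A.mulVec (v j))
        = ∑ j, μ j * ((v j) ⬝ᵥ A.mulVec (v j)) := by
      rw [hJ]
      apply Finset.sum_filter_of_ne
      intro j _ hne h0
      exact hne (by rw [h0]; ring)
    rw [e2, ← htr A, hA]
  have hwind : LinearIndependent ℝ w := by
    rw [Fintype.linearIndependent_iff]
    intro g hg
    intro l
    have hdot := congrArg (fun y => (v l.1) ⬝ᵥ y) hg
    rw [dotProduct_sum'] at hdot
    have e1 : ∀ m : {j // j ∈ J}, (v l.1) ⬝ᵥ (g m • w m)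
        = g m * Real.sqrt (μ m.1) * (if l.1 = m.1 then 1 else 0) := by
      intro m
      rw [hw]
      simp only
      rw [smul_smul, dotProduct_smul, hvv l.1 m.1]
      simp [smul_eq_mul]
    rw [Finset.sum_congr rfl (fun m _ => e1 m)] at hdot
    rw [Finset.sum_eq_single l] at hdot
    · simp at hdot
      rcases hdot with h | h
      · exact h
      · exact absurd h (ne_of_gt (Real.sqrt_pos.mpr (hμpos l)))
    · intro m _ hml
      have : l.1 ≠ m.1 := fun h => hml (Subtype.ext h.symm)
      simp [this]
    · intro h
      exact absurd (Finset.mem_univ l) h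
  -- reindex and apply key
  set e := J.equivFin with he
  have := key hA₁ hA₂ hdim k hkpos (fun i => w (e.symm i))
    (hwind.comp e.symm e.symm.injective)
    (fun i => hwmem _) ?_ ?_
  · exact this
  · rw [Equiv.sum_comp e.symm (fun l => (w l) ⬝ᵥ A₁.mulVec (w l))]
    exact hwsum A₁ h1
  · rw [Equiv.sum_comp e.symm (fun l => (w l) ⬝ᵥ A₂.mulVec (w l))]
    exact hwsum A₂ h2
end

section
/- Let A_1, A_2 be real symmetric n×n matrices and suppose max{x^T A_1 x, x^T A_2 x} ≥ 0 for all x ∈ ℝ^n. Then there exist λ_1, λ_2 ≥ 0 with λ_1 + λ_2 = 1 such that λ_1 A_1 + λ_2 A_2 ⪰ 0. -/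
open Matrix

private lemma symm_dot {n : ℕ} (M : Matrix (Fin n) (Fin n) ℝ) (h : M.IsSymm)
    (x y : Fin n → ℝ) : x ⬝ᵥ M.mulVec y = y ⬝ᵥ M.mulVec x := by
  rw [Matrix.dotProduct_mulVec, ← Matrix.mulVec_transpose, h, dotProduct_comm]

private lemma quad_expand {n : ℕ} (M : Matrix (Fin n) (Fin n) ℝ) (h : M.IsSymm)
    (x y : Fin n → ℝ) (a b : ℝ) :
    ((a • x + b • y) ⬝ᵥ M.mulVec (a • x + b • y)) =
      a ^ 2 * (x ⬝ᵥ M.mulVec x) + 2 * a * b * (x ⬝ᵥ M.mulVec y)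
        + b ^ 2 * (y ⬝ᵥ M.mulVec y) := by
  have hyx := symm_dot M h x y
  simp only [Matrix.mulVec_add, Matrix.mulVec_smul, dotProduct_add, add_dotProduct,
    dotProduct_smul, smul_dotProduct, smul_eq_mul]
  linear_combination (-(a * b)) * hyx

theorem stmt_19 (n : ℕ) (A₁ A₂ : Matrix (Fin n) (Fin n) ℝ)
    (hA₁ : A₁.IsSymm) (hA₂ : A₂.IsSymm)
    (hmax : ∀ x : Fin n → ℝ, 0 ≤ max (x ⬝ᵥ A₁.mulVec x) (x ⬝ᵥ A₂.mulVec x)) :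
    ∃ l₁ l₂ : ℝ, 0 ≤ l₁ ∧ 0 ≤ l₂ ∧ l₁ + l₂ = 1 ∧
      (l₁ • A₁ + l₂ • A₂).PosSemidef := by
  set q₁ : (Fin n → ℝ) → ℝ := fun x => x ⬝ᵥ A₁.mulVec x with hq₁
  set q₂ : (Fin n → ℝ) → ℝ := fun x => x ⬝ᵥ A₂.mulVec x with hq₂
  set M : ℝ → Matrix (Fin n) (Fin n) ℝ := fun t => (1 - t) • A₁ + t • A₂ with hM
  have hMsymm : ∀ t, (M t).IsSymm := by
    intro t
    simp only [hM, Matrix.IsSymm, Matrix.transpose_add, Matrix.transpose_smul, hA₁.eq, hA₂.eq]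
  have hquadM : ∀ t x, x ⬝ᵥ (M t).mulVec x = (1 - t) * q₁ x + t * q₂ x := by
    intro t x
    simp [hM, Matrix.add_mulVec, Matrix.smul_mulVec, hq₁, hq₂, smul_eq_mul]
  have hforce₁ : ∀ x, q₂ x < 0 → 0 ≤ q₁ x := by
    intro x hx
    by_contra h
    push_neg at h
    have : max (q₁ x) (q₂ x) < 0 := max_lt h hx
    linarith [hmax x]
  have hforce₂ : ∀ x, q₁ x < 0 → 0 ≤ q₂ x := by
    intro x hx
    by_contra h
    push_neg at h
    have : max (q₁ x) (q₂ x) < 0 := max_lt hx h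
    linarith [hmax x]
  -- main claim : some matrix in the pencil is PSD
  have key : ∃ t ∈ Set.Icc (0:ℝ) 1, (M t).PosSemidef := by
    by_contra hcon
    push_neg at hcon
    -- each M t (t ∈ [0,1]) has a negative vector
    have hneg : ∀ t ∈ Set.Icc (0:ℝ) 1, ∃ x, x ⬝ᵥ (M t).mulVec x < 0 := by
      intro t ht
      have h := hcon t ht
      rw [Matrix.posSemidef_iff_dotProduct_mulVec] at h
      push_neg at h
      obtain ⟨x, hx⟩ := h (hMsymm t)
      exact ⟨x, by simpa using hx⟩
    -- the two open sets
    set U₁ : Set ℝ := {t | ∃ x, q₂ x < 0 ∧ x ⬝ᵥ (M t).mulVec x < 0} with hU₁def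
    set U₂ : Set ℝ := {t | ∃ x, q₁ x < 0 ∧ x ⬝ᵥ (M t).mulVec x < 0} with hU₂def
    have hopen : ∀ (q : (Fin n → ℝ) → ℝ),
        IsOpen {t : ℝ | ∃ x, q x < 0 ∧ x ⬝ᵥ (M t).mulVec x < 0} := by
      intro q
      have : {t : ℝ | ∃ x, q x < 0 ∧ x ⬝ᵥ (M t).mulVec x < 0} =
          ⋃ x, ⋃ (_ : q x < 0), (fun t : ℝ => (1 - t) * q₁ x + t * q₂ x) ⁻¹' Set.Iio 0 := by
        ext t
        simp [hquadM, and_comm]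
      rw [this]
      refine isOpen_iUnion fun x => isOpen_iUnion fun _ => ?_
      exact (Continuous.add (by fun_prop) (by fun_prop)).isOpen_preimage _ isOpen_Iio
    have hcover : Set.Icc (0:ℝ) 1 ⊆ U₁ ∪ U₂ := by
      intro t ht
      obtain ⟨x, hx⟩ := hneg t ht
      rw [hquadM] at hx
      have : q₁ x < 0 ∨ q₂ x < 0 := by
        by_contra h
        push_neg at h
        nlinarith [h.1, h.2, ht.1, ht.2]
      rcases this with h | h
      · right
        exact ⟨x, h, by rw [hquadM]; exact hx⟩
      · left
        exact ⟨x, h, by rw [hquadM]; exact hx⟩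
    have h1 : (Set.Icc (0:ℝ) 1 ∩ U₁).Nonempty := by
      obtain ⟨x, hx⟩ := hneg 1 (by norm_num)
      rw [hquadM] at hx
      have hx2 : q₂ x < 0 := by linarith
      exact ⟨1, by norm_num, x, hx2, by rw [hquadM]; linarith⟩
    have h0 : (Set.Icc (0:ℝ) 1 ∩ U₂).Nonempty := by
      obtain ⟨x, hx⟩ := hneg 0 (by norm_num)
      rw [hquadM] at hx
      have hx1 : q₁ x < 0 := by linarith
      exact ⟨0, by norm_num, x, hx1, by rw [hquadM]; linarith⟩
    obtain ⟨t, htIcc, htU₁, htU₂⟩ :=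
      isPreconnected_Icc U₁ U₂ (hopen q₂) (hopen q₁) hcover h1 h0
    obtain ⟨x, hxq₂, hxM⟩ := htU₁
    obtain ⟨y, hyq₁, hyM⟩ := htU₂
    have hxq₁ : 0 ≤ q₁ x := hforce₁ x hxq₂
    have hyq₂ : 0 ≤ q₂ y := hforce₂ y hyq₁
    -- t cannot be 0 or 1
    have ht0 : 0 < t := by
      rcases eq_or_lt_of_le htIcc.1 with h | h
      · exfalso
        rw [hquadM] at hxM
        rw [← h] at hxM
        simp at hxM
        linarith
      · exact h
    have ht1 : t < 1 := by
      rcases eq_or_lt_of_le htIcc.2 with h | h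
      · exfalso
        rw [hquadM, h] at hyM
        simp at hyM
        linarith
      · exact h
    -- replace y by -y if needed so that the cross term is ≤ 0
    obtain ⟨y, hyq₁, hyM, hyq₂, hcross⟩ :
        ∃ y', q₁ y' < 0 ∧ y' ⬝ᵥ (M t).mulVec y' < 0 ∧ 0 ≤ q₂ y' ∧
          x ⬝ᵥ (M t).mulVec y' ≤ 0 := by
      rcases le_or_gt (x ⬝ᵥ (M t).mulVec y) 0 with h | h
      · exact ⟨y, hyq₁, hyM, hyq₂, h⟩
      · refine ⟨-y, ?_, ?_, ?_, ?_⟩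
        · simpa [hq₁, Matrix.mulVec_neg, dotProduct_neg, neg_dotProduct] using hyq₁
        · simpa [Matrix.mulVec_neg, dotProduct_neg, neg_dotProduct] using hyM
        · simpa [hq₂, Matrix.mulVec_neg, dotProduct_neg, neg_dotProduct] using hyq₂
        · simp only [Matrix.mulVec_neg, dotProduct_neg]
          linarith
    -- the path z θ = (1-θ)x + θy
    set z : ℝ → (Fin n → ℝ) := fun θ => (1 - θ) • x + θ • y with hz
    -- quadratic forms along the path
    have hmz : ∀ θ ∈ Set.Icc (0:ℝ) 1, (z θ) ⬝ᵥ (M t).mulVec (z θ) < 0 := by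
      intro θ hθ
      rw [hz]
      rw [quad_expand (M t) (hMsymm t) x y (1 - θ) θ]
      have e1 : (1 - θ)^2 * (x ⬝ᵥ (M t).mulVec x) ≤ 0 :=
        mul_nonpos_of_nonneg_of_nonpos (sq_nonneg _) hxM.le
      have e3 : θ^2 * (y ⬝ᵥ (M t).mulVec y) ≤ 0 :=
        mul_nonpos_of_nonneg_of_nonpos (sq_nonneg _) hyM.le
      have e2 : 2 * (1 - θ) * θ * (x ⬝ᵥ (M t).mulVec y) ≤ 0 := by
        have h2 : (0:ℝ) ≤ 2 * (1 - θ) * θ := by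
          have := hθ.1; have := hθ.2; nlinarith
        exact mul_nonpos_of_nonneg_of_nonpos h2 hcross
      rcases eq_or_ne (1 - θ) 0 with h | h
      · have hθ1 : θ = 1 := by linarith
        rw [hθ1]
        simp only [sub_self, one_pow]
        nlinarith
      · have hsq : (0:ℝ) < (1 - θ)^2 := lt_of_le_of_ne (sq_nonneg _) (Ne.symm (pow_ne_zero 2 h))
        have e1' : (1 - θ)^2 * (x ⬝ᵥ (M t).mulVec x) < 0 := mul_neg_of_pos_of_neg hsq hxM
        linarith
    set φ : ℝ → ℝ := fun θ =>
      (1 - θ)^2 * q₁ x + 2 * (1 - θ) * θ * (x ⬝ᵥ A₁.mulVec y) + θ^2 * q₁ y with hφdef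
    set ψ : ℝ → ℝ := fun θ =>
      (1 - θ)^2 * q₂ x + 2 * (1 - θ) * θ * (x ⬝ᵥ A₂.mulVec y) + θ^2 * q₂ y with hψdef
    have hφ : ∀ θ, q₁ (z θ) = φ θ := fun θ => quad_expand A₁ hA₁ x y (1 - θ) θ
    have hψ : ∀ θ, q₂ (z θ) = ψ θ := fun θ => quad_expand A₂ hA₂ x y (1 - θ) θ
    have hφcont : Continuous φ := by fun_prop
    have hψcont : Continuous ψ := by fun_prop
    have hmix : ∀ θ, (z θ) ⬝ᵥ (M t).mulVec (z θ) = (1 - t) * φ θ + t * ψ θ := by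
      intro θ
      rw [hquadM, hφ, hψ]
    have hφ0 : 0 ≤ φ 0 := by
      have : φ 0 = q₁ x := by simp [hφdef]
      rw [this]; exact hxq₁
    have hφ1 : φ 1 < 0 := by
      have : φ 1 = q₁ y := by simp [hφdef]
      rw [this]; exact hyq₁
    -- the last point where φ ≥ 0
    set S : Set ℝ := Set.Icc (0:ℝ) 1 ∩ φ ⁻¹' Set.Ici 0 with hSdef
    have hScomp : IsCompact S :=
      isCompact_Icc.inter_right (isClosed_Ici.preimage hφcont)
    have hSne : S.Nonempty := ⟨0, by norm_num, by simpa using hφ0⟩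
    set θ₀ : ℝ := sSup S with hθ₀def
    have hθ₀S : θ₀ ∈ S := hScomp.sSup_mem hSne
    have hθ₀Icc : θ₀ ∈ Set.Icc (0:ℝ) 1 := hθ₀S.1
    have hφθ₀ : 0 ≤ φ θ₀ := hθ₀S.2
    have hθ₀lt1 : θ₀ < 1 := by
      rcases eq_or_lt_of_le hθ₀Icc.2 with h | h
      · exfalso; rw [h] at hφθ₀; linarith
      · exact h
    have hψθ₀ : ψ θ₀ < 0 := by
      have hm := hmz θ₀ hθ₀Icc
      rw [hmix] at hm
      nlinarith
    -- find θ slightly past θ₀ where both φ and ψ are negative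
    have hcontat : ContinuousAt ψ θ₀ := hψcont.continuousAt
    rw [Metric.continuousAt_iff] at hcontat
    obtain ⟨δ, hδpos, hδ⟩ := hcontat (-ψ θ₀) (by linarith)
    set θ : ℝ := min 1 (θ₀ + δ / 2) with hθdef
    have hθgt : θ₀ < θ := lt_min hθ₀lt1 (by linarith)
    have hθle1 : θ ≤ 1 := min_le_left _ _
    have hθIcc : θ ∈ Set.Icc (0:ℝ) 1 := ⟨le_trans hθ₀Icc.1 hθgt.le, hθle1⟩
    have hψθ : ψ θ < 0 := by
      have hd : dist θ θ₀ < δ := by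
        rw [Real.dist_eq, abs_of_nonneg (by linarith)]
        have : θ ≤ θ₀ + δ / 2 := min_le_right _ _
        linarith
      have := hδ hd
      rw [Real.dist_eq] at this
      have := abs_lt.mp this
      linarith [this.1, this.2]
    have hφθ : φ θ < 0 := by
      by_contra h
      push_neg at h
      have : θ ∈ S := ⟨hθIcc, h⟩
      have : θ ≤ θ₀ := le_csSup hScomp.bddAbove this
      linarith
    have := hmax (z θ)
    have hmaxθ : max (q₁ (z θ)) (q₂ (z θ)) < 0 := by
      rw [hφ, hψ]
      exact max_lt hφθ hψθ
    rw [hq₁, hq₂] at hmaxθ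
    simp only at hmaxθ this
    linarith [lt_of_le_of_lt this hmaxθ]
  obtain ⟨t, ht, hPSD⟩ := key
  exact ⟨1 - t, t, by linarith [ht.2], ht.1, by ring, hPSD⟩
end
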